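/- Let p₁, p₀ ∈ (0,1) be defined by p_j = θ·e^{α+β+γj}/(1+e^{α+β+γj}) + (1−θ)·e^{α+γj}/(1+e^{α+γj}) for j = 0,1, with θ ∈ (0,1). Then log(p₁(1−p₀)/(p₀(1−p₁))) = γ + log(1 + e^α(b₁−b₂)(1−e^γ)/((1+e^{α+γ}b₁)(1+e^α b₂))), where b₁ = e^β(1−θ)+θ and b₂ = e^β/(e^βθ+1−θ). -/

import Mathlib

set_option maxHeartbeats 4000000 in
lemma key_alg (A B G t : ℝ) (hA : 0 < A) (hB : 0 < B) (hG : 0 < G)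
    (ht0 : 0 < t) (ht1 : t < 1) :
    (t * (A*B*G/(1+A*B*G)) + (1-t) * (A*G/(1+A*G))) *
      (1 - (t * (A*B/(1+A*B)) + (1-t) * (A/(1+A)))) /
    ((t * (A*B/(1+A*B)) + (1-t) * (A/(1+A))) *
      (1 - (t * (A*B*G/(1+A*B*G)) + (1-t) * (A*G/(1+A*G))))) =
    G * (1 + A * ((B*(1-t)+t) - B/(B*t+1-t)) * (1-G) /
      ((1 + A*G*(B*(1-t)+t)) * (1 + A*(B/(B*t+1-t))))) := by
  have h1 : (1:ℝ) + A*B*G > 0 := by positivity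
  have h2 : (1:ℝ) + A*G > 0 := by positivity
  have h3 : (1:ℝ) + A*B > 0 := by positivity
  have h4 : (1:ℝ) + A > 0 := by positivity
  have h5 : B*t+1-t > 0 := by nlinarith
  have h6 : (1:ℝ) + A*G*(B*(1-t)+t) > 0 := by nlinarith
  have h7 : (1:ℝ) + A*(B/(B*t+1-t)) > 0 := by positivity
  have hden : (1 + A*G*(B*(1-t)+t)) * (1 + A*(B/(B*t+1-t))) ≠ 0 := by positivity
  have hP0 : t * (A*B/(1+A*B)) + (1-t) * (A/(1+A)) > 0 := by
    have := div_pos (by positivity : (0:ℝ) < A*B) h3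
    have := div_pos hA h4
    nlinarith
  have hP1 : 1 - (t * (A*B*G/(1+A*B*G)) + (1-t) * (A*G/(1+A*G))) > 0 := by
    have e1 : A*B*G/(1+A*B*G) < 1 := by rw [div_lt_one h1]; linarith
    have e2 : A*G/(1+A*G) < 1 := by rw [div_lt_one h2]; linarith
    nlinarith [div_pos (by positivity : (0:ℝ) < A*B*G) h1, div_pos (by positivity : (0:ℝ) < A*G) h2]
  have hD : (t * (A*B/(1+A*B)) + (1-t) * (A/(1+A))) *
      (1 - (t * (A*B*G/(1+A*B*G)) + (1-t) * (A*G/(1+A*G)))) ≠ 0 :=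
    ne_of_gt (mul_pos hP0 hP1)
  rw [add_div' _ _ _ hden, mul_div_assoc' G, div_eq_div_iff hD hden]
  have h5' : (1 - t + t * B) ≠ 0 := by nlinarith
  field_simp
  ring_nf
  field_simp
  ring

theorem marginal_log_odds_ratio (α β γ θ : ℝ) (hθ : θ ∈ Set.Ioo (0:ℝ) 1) :
    let p : ℝ → ℝ := fun j =>
      θ * (Real.exp (α + β + γ * j) / (1 + Real.exp (α + β + γ * j))) +
        (1 - θ) * (Real.exp (α + γ * j) / (1 + Real.exp (α + γ * j)))
    let b₁ := Real.exp β * (1 - θ) + θ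
    let b₂ := Real.exp β / (Real.exp β * θ + 1 - θ)
    Real.log (p 1 * (1 - p 0) / (p 0 * (1 - p 1))) =
      γ + Real.log (1 + Real.exp α * (b₁ - b₂) * (1 - Real.exp γ) /
        ((1 + Real.exp (α + γ) * b₁) * (1 + Real.exp α * b₂))) := by
  obtain ⟨hθ0, hθ1⟩ := hθ
  intro p b₁ b₂
  have eα := Real.exp_pos α
  have eβ := Real.exp_pos β
  have eγ := Real.exp_pos γ
  have key : p 1 * (1 - p 0) / (p 0 * (1 - p 1)) =
      Real.exp γ * (1 + Real.exp α * (b₁ - b₂) * (1 - Real.exp γ) /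
        ((1 + Real.exp (α + γ) * b₁) * (1 + Real.exp α * b₂))) := by
    simp only [p, b₁, b₂, mul_one, mul_zero, add_zero]
    rw [Real.exp_add (α + β) γ, Real.exp_add α β, Real.exp_add α γ]
    exact key_alg (Real.exp α) (Real.exp β) (Real.exp γ) θ eα eβ eγ hθ0 hθ1
  have hsig : ∀ x : ℝ, 0 < Real.exp x / (1 + Real.exp x) ∧ Real.exp x / (1 + Real.exp x) < 1 := by
    intro x
    have hx := Real.exp_pos x
    constructor
    · positivity
    · rw [div_lt_one (by positivity)]; linarith
  have hp : ∀ j : ℝ, 0 < p j ∧ p j < 1 := by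
    intro j
    obtain ⟨h1, h2⟩ := hsig (α + β + γ * j)
    obtain ⟨h3, h4⟩ := hsig (α + γ * j)
    have hj : p j = θ * (Real.exp (α + β + γ * j) / (1 + Real.exp (α + β + γ * j))) +
        (1 - θ) * (Real.exp (α + γ * j) / (1 + Real.exp (α + γ * j))) := rfl
    constructor
    · rw [hj]; nlinarith
    · rw [hj]; nlinarith
  obtain ⟨hp00, hp01⟩ := hp 0
  obtain ⟨hp10, hp11⟩ := hp 1
  have hX : 0 < p 1 * (1 - p 0) / (p 0 * (1 - p 1)) := by
    apply div_pos <;> apply mul_pos <;> linarith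
  have hY : 0 < 1 + Real.exp α * (b₁ - b₂) * (1 - Real.exp γ) /
      ((1 + Real.exp (α + γ) * b₁) * (1 + Real.exp α * b₂)) := by
    rw [key] at hX
    nlinarith [hX, eγ]
  rw [key, Real.log_mul (ne_of_gt eγ) (ne_of_gt hY), Real.log_exp]
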